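/- Suppose h is analytic and bounded on the closed right half-plane {Re ζ ≥ 0}, and satisfies h(ζ) = O(e^{-x|ζ|}) as ζ → ±i∞ along the imaginary axis, for some x > 0. Then h ≡ 0 on the right half-plane. -/

import Mathlib

open Set Function Filter Asymptotics Complex Bornology
open scoped Topology Real

local notation "expR" => Real.exp

lemma carlson_step1 (h : ℂ → ℂ) (x M C : ℝ) (hx : 0 < x)
    (hd : DifferentiableOn ℂ h {z : ℂ | 0 < z.re})
    (hc : ContinuousOn h {z : ℂ | 0 ≤ z.re})
    (hb : ∀ z : ℂ, 0 ≤ z.re → ‖h z‖ ≤ M)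
    (hdec : ∀ t : ℝ, ‖h ((t : ℂ) * Complex.I)‖ ≤ C * Real.exp (-x * |t|)) :
    ∀ z : ℂ, 0 ≤ z.re → ‖h z‖ ≤ max M C * Real.exp (-x * |z.im|) := by
  have hM0 : 0 ≤ M := le_trans (norm_nonneg _) (hb 0 (by simp))
  have hnorm : ∀ (a : ℝ) (w : ℂ),
      ‖Complex.exp ((a : ℂ) * I * w) * h w‖ = expR (-(a * w.im)) * ‖h w‖ := by
    intro a w
    rw [norm_mul, Complex.norm_exp]
    congr 2
    simp [Complex.mul_re, Complex.mul_im]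
  have quad : ∀ (a : ℝ), |a| = x → ∀ z : ℂ, 0 ≤ z.re →
      (∀ t : ℝ, 0 ≤ a * t → ‖h ((t : ℂ) * I)‖ * expR (-(a * t)) ≤ C) →
      True := fun _ _ _ _ _ => trivial
  intro z hz
  rcases le_total 0 z.im with him | him
  · -- quadrant I with a = -x
    set f : ℂ → ℂ := fun w => Complex.exp (((-x : ℝ) : ℂ) * I * w) * h w with hf
    have hsub : (Ioi (0:ℝ) ×ℂ Ioi (0:ℝ)) ⊆ {w : ℂ | 0 < w.re} := fun w hw => hw.1
    have hclsub : closure (Ioi (0:ℝ) ×ℂ Ioi (0:ℝ)) ⊆ {w : ℂ | 0 ≤ w.re} :=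
      closure_minimal (fun w hw => show 0 ≤ w.re from le_of_lt hw.1)
        (isClosed_le continuous_const Complex.continuous_re)
    have hde : Differentiable ℂ fun w : ℂ => Complex.exp (((-x : ℝ) : ℂ) * I * w) :=
      (differentiable_id.const_mul _).cexp
    have hd1 : DiffContOnCl ℂ f (Ioi 0 ×ℂ Ioi 0) :=
      ⟨(hde.differentiableOn).mul (hd.mono hsub),
        (hde.continuous.continuousOn).mul (hc.mono hclsub)⟩
    have hB1 : ∃ c < (2:ℝ), ∃ B,
        f =O[Bornology.cobounded ℂ ⊓ 𝓟 (Ioi 0 ×ℂ Ioi 0)] fun w => expR (B * ‖w‖ ^ c) := by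
      refine ⟨1, one_lt_two, x, IsBigO.of_bound M ?_⟩
      refine eventually_inf_principal.2 (Eventually.of_forall fun w hw => ?_)
      rw [hnorm, Real.norm_eq_abs, abs_of_pos (Real.exp_pos _), Real.rpow_one]
      have h1 : ‖h w‖ ≤ M := hb w (le_of_lt hw.1)
      have h2 : expR (-(-x * w.im)) ≤ expR (x * ‖w‖) := by
        apply Real.exp_le_exp.2
        have : w.im ≤ ‖w‖ := le_trans (le_abs_self _) (Complex.abs_im_le_norm w)
        nlinarith [hx.le]
      calc expR (-(-x * w.im)) * ‖h w‖ ≤ expR (x * ‖w‖) * M := by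
            exact mul_le_mul h2 h1 (norm_nonneg _) (Real.exp_pos _).le
        _ = M * expR (x * ‖w‖) := mul_comm _ _
    have hre1 : ∀ s : ℝ, 0 ≤ s → ‖f (s : ℂ)‖ ≤ max M C := by
      intro s hs
      rw [hnorm]
      simp only [Complex.ofReal_im, mul_zero, neg_zero, Real.exp_zero, one_mul]
      exact le_trans (hb _ (by simp [hs])) (le_max_left _ _)
    have him1 : ∀ t : ℝ, 0 ≤ t → ‖f ((t : ℂ) * I)‖ ≤ max M C := by
      intro t ht
      rw [hnorm]
      simp only [Complex.mul_I_im, Complex.ofReal_re]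
      have := hdec t
      calc expR (-(-x * t)) * ‖h ((t:ℂ) * I)‖
          ≤ expR (x * t) * (C * expR (-x * |t|)) := by
            rw [neg_mul, neg_neg]
            exact mul_le_mul_of_nonneg_left this (Real.exp_pos _).le
        _ = C := by
            rw [_root_.abs_of_nonneg ht]
            rw [mul_comm C, ← mul_assoc, ← Real.exp_add]
            ring_nf
            simp
        _ ≤ max M C := le_max_right _ _
    have key := PhragmenLindelof.quadrant_I hd1 hB1 hre1 him1 hz him
    rw [hnorm] at key
    rw [_root_.abs_of_nonneg him]
    have hep : (0:ℝ) < expR (-(-x * z.im)) := Real.exp_pos _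
    calc ‖h z‖ = expR (-(-x*z.im)) * ‖h z‖ * expR (-x*z.im) := by
          rw [mul_assoc, mul_comm (‖h z‖), ← mul_assoc, ← Real.exp_add]
          simp
      _ ≤ max M C * expR (-x * z.im) :=
          mul_le_mul_of_nonneg_right key (Real.exp_pos _).le
  · -- quadrant IV with a = x
    set f : ℂ → ℂ := fun w => Complex.exp ((x : ℂ) * I * w) * h w with hf
    have hsub : (Ioi (0:ℝ) ×ℂ Iio (0:ℝ)) ⊆ {w : ℂ | 0 < w.re} := fun w hw => hw.1
    have hclsub : closure (Ioi (0:ℝ) ×ℂ Iio (0:ℝ)) ⊆ {w : ℂ | 0 ≤ w.re} :=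
      closure_minimal (fun w hw => show 0 ≤ w.re from le_of_lt hw.1)
        (isClosed_le continuous_const Complex.continuous_re)
    have hde : Differentiable ℂ fun w : ℂ => Complex.exp ((x : ℂ) * I * w) :=
      (differentiable_id.const_mul _).cexp
    have hd1 : DiffContOnCl ℂ f (Ioi 0 ×ℂ Iio 0) :=
      ⟨(hde.differentiableOn).mul (hd.mono hsub),
        (hde.continuous.continuousOn).mul (hc.mono hclsub)⟩
    have hB1 : ∃ c < (2:ℝ), ∃ B,
        f =O[Bornology.cobounded ℂ ⊓ 𝓟 (Ioi 0 ×ℂ Iio 0)] fun w => expR (B * ‖w‖ ^ c) := by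
      refine ⟨1, one_lt_two, x, IsBigO.of_bound M ?_⟩
      refine eventually_inf_principal.2 (Eventually.of_forall fun w hw => ?_)
      rw [hnorm, Real.norm_eq_abs, abs_of_pos (Real.exp_pos _), Real.rpow_one]
      have h1 : ‖h w‖ ≤ M := hb w (le_of_lt hw.1)
      have h2 : expR (-(x * w.im)) ≤ expR (x * ‖w‖) := by
        apply Real.exp_le_exp.2
        have : -w.im ≤ ‖w‖ := le_trans (neg_le_abs _) (Complex.abs_im_le_norm w)
        nlinarith [hx.le]
      calc expR (-(x * w.im)) * ‖h w‖ ≤ expR (x * ‖w‖) * M :=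
            mul_le_mul h2 h1 (norm_nonneg _) (Real.exp_pos _).le
        _ = M * expR (x * ‖w‖) := mul_comm _ _
    have hre1 : ∀ s : ℝ, 0 ≤ s → ‖f (s : ℂ)‖ ≤ max M C := by
      intro s hs
      rw [hnorm]
      simp only [Complex.ofReal_im, mul_zero, neg_zero, Real.exp_zero, one_mul]
      exact le_trans (hb _ (by simp [hs])) (le_max_left _ _)
    have him1 : ∀ t : ℝ, t ≤ 0 → ‖f ((t : ℂ) * I)‖ ≤ max M C := by
      intro t ht
      rw [hnorm]
      simp only [Complex.mul_I_im, Complex.ofReal_re]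
      have := hdec t
      calc expR (-(x * t)) * ‖h ((t:ℂ) * I)‖
          ≤ expR (-(x * t)) * (C * expR (-x * |t|)) :=
            mul_le_mul_of_nonneg_left this (Real.exp_pos _).le
        _ = C := by
            rw [_root_.abs_of_nonpos ht]
            rw [mul_comm C, ← mul_assoc, ← Real.exp_add]
            ring_nf
            simp
        _ ≤ max M C := le_max_right _ _
    have key := PhragmenLindelof.quadrant_IV hd1 hB1 hre1 him1 hz him
    rw [hnorm] at key
    rw [_root_.abs_of_nonpos him]
    calc ‖h z‖ = expR (-(x*z.im)) * ‖h z‖ * expR (x*z.im) := by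
          rw [mul_assoc, mul_comm (‖h z‖), ← mul_assoc, ← Real.exp_add]
          simp
      _ ≤ max M C * expR (-x * -z.im) := by
          rw [show -x * -z.im = x * z.im by ring]
          exact mul_le_mul_of_nonneg_right key (Real.exp_pos _).le
/-- Carlson-type theorem: if `h` is analytic in the open right half-plane, continuous and
bounded on the closed right half-plane, and `h(it) = O(e^{-x|t|})` on the imaginary axis for
some `x > 0`, then `h ≡ 0` on the closed right half-plane. -/
theorem carlson_vanishing (h : ℂ → ℂ) (x : ℝ) (hx : 0 < x)
    (hd : DifferentiableOn ℂ h {z : ℂ | 0 < z.re})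
    (hc : ContinuousOn h {z : ℂ | 0 ≤ z.re})
    (hb : ∃ M : ℝ, ∀ z : ℂ, 0 ≤ z.re → ‖h z‖ ≤ M)
    (hdec : ∃ C : ℝ, ∀ t : ℝ, ‖h ((t : ℂ) * Complex.I)‖ ≤ C * Real.exp (-x * |t|)) :
    ∀ z : ℂ, 0 ≤ z.re → h z = 0 := by
  obtain ⟨M, hb⟩ := hb
  obtain ⟨C, hdec⟩ := hdec
  have hM0 : 0 ≤ M := le_trans (norm_nonneg _) (hb 0 (by norm_num))
  set K := max M C with hK
  have hK0 : 0 ≤ K := le_trans hM0 (le_max_left _ _)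
  have step1 := carlson_step1 h x M C hx hd hc hb hdec
  have main : ∀ z : ℂ, 0 < z.re → h z = 0 := by
    intro z hz
    have hz0 : z ≠ 0 := by
      intro h0
      rw [h0] at hz
      simp at hz
    have key : ∀ l : ℝ, 0 < l → ‖h z‖ * expR (l * z.re) ≤ K := by
      intro l hl
      set θ := Real.arctan (l / x) with hθ
      have hθpos : 0 < θ := by
        have := Real.arctan_strictMono (show (0:ℝ) < l / x from div_pos hl hx)
        rw [Real.arctan_zero] at this
        exact this
      have hθlt : θ < π / 2 := Real.arctan_lt_pi_div_two _
      have hsq : Real.sqrt (1 + (l / x) ^ 2) ≠ 0 := by positivity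
      have hbal : l * Real.cos θ - x * Real.sin θ = 0 := by
        rw [hθ, Real.sin_arctan, Real.cos_arctan]
        field_simp
        ring
      have hsinθ : 0 ≤ Real.sin θ := Real.sin_nonneg_of_nonneg_of_le_pi hθpos.le
        (by linarith [Real.pi_pos])
      by_cases hcase : l * z.re ≤ x * |z.im|
      · -- pointwise bound from step 1
        have h1 := step1 z hz.le
        calc ‖h z‖ * expR (l * z.re)
            ≤ K * expR (-x * |z.im|) * expR (l * z.re) :=
              mul_le_mul_of_nonneg_right h1 (Real.exp_pos _).le
          _ = K * expR (l * z.re + -x * |z.im|) := by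
              rw [mul_assoc, ← Real.exp_add, add_comm]
          _ ≤ K * expR 0 := by
              apply mul_le_mul_of_nonneg_left _ hK0
              exact Real.exp_le_exp.2 (by linarith)
          _ = K := by simp
      · -- strip case
        push_neg at hcase
        have harg : |Complex.arg z| ≤ θ := by
          have hargpi : |Complex.arg z| < π / 2 :=
            Complex.abs_arg_lt_pi_div_two_iff.2 (Or.inl hz)
          have htan : Real.tan |Complex.arg z| = |z.im| / z.re := by
            rcases le_total 0 (Complex.arg z) with ha | ha
            · rw [_root_.abs_of_nonneg ha, Complex.tan_arg,
                _root_.abs_of_nonneg (Complex.arg_nonneg_iff.1 ha)]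
            · have him0 : z.im ≤ 0 := by
                rcases ha.lt_or_eq with ha' | ha'
                · exact (Complex.arg_neg_iff.1 ha').le
                · exact le_of_eq (Complex.arg_eq_zero_iff.1 ha').2
              rw [_root_.abs_of_nonpos ha, Real.tan_neg, Complex.tan_arg,
                _root_.abs_of_nonpos him0]
              field_simp
          have hargeq : |Complex.arg z| = Real.arctan (|z.im| / z.re) := by
            rw [← htan, Real.arctan_tan (by linarith [abs_nonneg (Complex.arg z)])
              (by linarith [abs_lt.1 hargpi])]
          rw [hargeq, hθ]
          apply Real.arctan_strictMono.monotone
          rw [div_le_div_iff₀ hz hx]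
          nlinarith
        set G : ℂ → ℂ := fun w => h (Complex.exp w) * Complex.exp ((l : ℂ) * Complex.exp w)
          with hG
        have hGnorm : ∀ w : ℂ,
            ‖G w‖ = ‖h (Complex.exp w)‖ * expR (l * (Complex.exp w).re) := by
          intro w
          rw [hG]
          rw [norm_mul, Complex.norm_exp,
            Complex.re_ofReal_mul]
        have hmapso : MapsTo Complex.exp (im ⁻¹' Ioo (-θ) θ) {w : ℂ | 0 < w.re} := by
          intro w hw
          have hcw : 0 < Real.cos w.im :=
            Real.cos_pos_of_mem_Ioo ⟨by linarith [hw.1], by linarith [hw.2]⟩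
          show 0 < (Complex.exp w).re
          rw [Complex.exp_re]
          positivity
        have hmapsc : MapsTo Complex.exp (im ⁻¹' Icc (-θ) θ) {w : ℂ | 0 ≤ w.re} := by
          intro w hw
          have hcw : 0 ≤ Real.cos w.im :=
            Real.cos_nonneg_of_mem_Icc ⟨by linarith [hw.1], by linarith [hw.2]⟩
          show 0 ≤ (Complex.exp w).re
          rw [Complex.exp_re]
          positivity
        have hGd : DiffContOnCl ℂ G (im ⁻¹' Ioo (-θ) θ) := by
          constructor
          · apply DifferentiableOn.mul
            · exact hd.comp Complex.differentiable_exp.differentiableOn hmapso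
            · exact ((Complex.differentiable_exp.const_mul _).cexp).differentiableOn
          · have hsub : closure (im ⁻¹' Ioo (-θ) θ) ⊆ im ⁻¹' Icc (-θ) θ :=
              closure_minimal (preimage_mono Ioo_subset_Icc_self)
                (IsClosed.preimage Complex.continuous_im isClosed_Icc)
            apply ContinuousOn.mono _ hsub
            apply ContinuousOn.mul
            · exact hc.comp Complex.continuous_exp.continuousOn hmapsc
            · exact ((continuous_const.mul Complex.continuous_exp).cexp).continuousOn
        have hGB : ∃ c < π / (θ - -θ), ∃ B,
            G =O[comap (_root_.abs ∘ Complex.re) atTop ⊓ 𝓟 (im ⁻¹' Ioo (-θ) θ)]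
              fun w => expR (B * expR (c * |w.re|)) := by
          refine ⟨1, ?_, l, IsBigO.of_bound M ?_⟩
          · rw [sub_neg_eq_add, lt_div_iff₀ (by linarith)]
            linarith
          · refine eventually_inf_principal.2 (Eventually.of_forall fun w hw => ?_)
            rw [hGnorm, Real.norm_eq_abs, _root_.abs_of_pos (Real.exp_pos _)]
            have h1 : ‖h (Complex.exp w)‖ ≤ M := hb _ (hmapso hw).le
            have h2 : expR (l * (Complex.exp w).re) ≤ expR (l * expR (1 * |w.re|)) := by
              apply Real.exp_le_exp.2
              apply mul_le_mul_of_nonneg_left _ hl.le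
              rw [Complex.exp_re, one_mul]
              calc expR w.re * Real.cos w.im ≤ expR w.re * 1 :=
                    mul_le_mul_of_nonneg_left (Real.cos_le_one _) (Real.exp_pos _).le
                _ = expR w.re := mul_one _
                _ ≤ expR |w.re| := Real.exp_le_exp.2 (le_abs_self _)
            exact mul_le_mul h1 h2 (Real.exp_pos _).le hM0
        have hedge : ∀ w : ℂ, |w.im| = θ → ‖G w‖ ≤ K := by
          intro w hwim
          have hcosw : Real.cos w.im = Real.cos θ := by rw [← Real.cos_abs, hwim]
          have hsinw : |Real.sin w.im| = Real.sin θ := by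
            rcases (abs_eq hθpos.le).1 hwim with h' | h'
            · rw [h', _root_.abs_of_nonneg hsinθ]
            · rw [h', Real.sin_neg, abs_neg, _root_.abs_of_nonneg hsinθ]
          have hre0 : 0 ≤ (Complex.exp w).re := by
            rw [Complex.exp_re, hcosw]
            have : 0 ≤ Real.cos θ := Real.cos_nonneg_of_mem_Icc ⟨by linarith, hθlt.le⟩
            positivity
          have h1 := step1 (Complex.exp w) hre0
          have hexpo : l * (Complex.exp w).re + -x * |(Complex.exp w).im| = 0 := by
            rw [Complex.exp_re, Complex.exp_im, hcosw, abs_mul,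
              _root_.abs_of_pos (Real.exp_pos _), hsinw]
            have : l * (expR w.re * Real.cos θ) + -x * (expR w.re * Real.sin θ)
                = expR w.re * (l * Real.cos θ - x * Real.sin θ) := by ring
            rw [this, hbal, mul_zero]
          rw [hGnorm]
          calc ‖h (Complex.exp w)‖ * expR (l * (Complex.exp w).re)
              ≤ K * expR (-x * |(Complex.exp w).im|) * expR (l * (Complex.exp w).re) :=
                mul_le_mul_of_nonneg_right h1 (Real.exp_pos _).le
            _ = K * expR (l * (Complex.exp w).re + -x * |(Complex.exp w).im|) := by
                rw [mul_assoc, ← Real.exp_add, add_comm]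
            _ = K := by rw [hexpo, Real.exp_zero, mul_one]
        have hstrip : ‖G (Complex.log z)‖ ≤ K := by
          apply PhragmenLindelof.horizontal_strip hGd hGB
          · intro w hw
            exact hedge w (by rw [hw, abs_neg, _root_.abs_of_pos hθpos])
          · intro w hw
            exact hedge w (by rw [hw, _root_.abs_of_pos hθpos])
          · rw [Complex.log_im]
            exact (abs_le.1 harg).1
          · rw [Complex.log_im]
            exact (abs_le.1 harg).2
        rw [hGnorm, Complex.exp_log hz0] at hstrip
        exact hstrip
    have hbound : ∀ l : ℝ, 0 < l → ‖h z‖ ≤ K * expR (-(l * z.re)) := by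
      intro l hl
      have e := key l hl
      have hrw : ‖h z‖
          = ‖h z‖ * expR (l * z.re) * expR (-(l * z.re)) := by
        rw [mul_assoc, ← Real.exp_add]
        simp
      rw [hrw]
      exact mul_le_mul_of_nonneg_right e (Real.exp_pos _).le
    have hlim : Tendsto (fun l : ℝ => K * expR (-(l * z.re))) atTop (𝓝 0) := by
      have h1 : Tendsto (fun l : ℝ => -(l * z.re)) atTop atBot :=
        tendsto_neg_atTop_atBot.comp (tendsto_id.atTop_mul_const hz)
      have := (Real.tendsto_exp_atBot.comp h1).const_mul K
      simpa using this
    have habs : ‖h z‖ ≤ 0 :=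
      ge_of_tendsto hlim ((eventually_gt_atTop 0).mono fun l hl => hbound l hl)
    exact norm_eq_zero.1 (le_antisymm habs (norm_nonneg _))
  have heq : EqOn h 0 (closure {w : ℂ | 0 < w.re}) :=
    EqOn.of_subset_closure (fun w hw => main w hw)
      (hc.mono (by rw [Complex.closure_setOf_lt_re])) continuousOn_const
      subset_closure Subset.rfl
  intro z hz
  have hmem : z ∈ closure {w : ℂ | 0 < w.re} := by
    rw [Complex.closure_setOf_lt_re]
    exact hz
  simpa using heq hmem
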